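/- For every Z ⊆ K with Σ_{a∈Z} δ_a ≤ τ: MER(∅,Z) = E_{q∼P^τ}[r_{1:τ}^{PICO(Z)}(q)], and the policy DP(Z) which, upon observing type u_t with current phase history H^{t−1}, pulls an arm in argmax_{a∈Z}( μ_{u_t,a} + MER(H^{t−1}∪{a},Z) ) attains expected first-phase reward E_{q∼P^τ}[r_{1:τ}^{DP(Z)}(q)] = MER(∅,Z). -/

import Mathlib

open scoped BigOperators Classical

namespace ExposureBandits

/-- Number of pulls of arm `a` in the (0-indexed) phase `j` of the pull sequence `pull`. -/
def pullsInPhase {k : ℕ} (T τ : ℕ) (pull : Fin T → Fin k) (j : ℕ) (a : Fin k) : ℕ :=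
  (Finset.univ.filter (fun t : Fin T =>
    j * τ ≤ (t : ℕ) ∧ (t : ℕ) < (j + 1) * τ ∧ pull t = a)).card

/-- Arm `a` is available at round `t` iff its exposure constraint was satisfied in every
completed phase. -/
def availableAt {k : ℕ} (T τ : ℕ) (δ : Fin k → ℕ) (pull : Fin T → Fin k)
    (t : Fin T) (a : Fin k) : Prop :=
  ∀ j : ℕ, (j + 1) * τ ≤ (t : ℕ) → δ a ≤ pullsInPhase T τ pull j a

/-- Conditional-expected reward of the pull sequence `pull` on the arrival sequence `q`:
pulls of unavailable (departed) arms yield zero utility. -/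
noncomputable def seqReward {k n : ℕ} (T τ : ℕ) (μ : Fin n → Fin k → ℝ) (δ : Fin k → ℕ)
    (pull : Fin T → Fin k) (q : Fin T → Fin n) : ℝ :=
  ∑ t : Fin T, if availableAt T τ δ pull t (pull t) then μ (q t) (pull t) else 0

/-- A deterministic online algorithm for the stochastic-optimization task: the arm pulled at
round `t` may depend only on the types observed in rounds `1,…,t`. -/
def Causal {k n T : ℕ} (f : (Fin T → Fin n) → Fin T → Fin k) : Prop :=
  ∀ q q' : Fin T → Fin n, ∀ t : Fin T,
    (∀ s : Fin T, s ≤ t → q s = q' s) → f q t = f q' t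

abbrev Alg (k n T : ℕ) := {f : (Fin T → Fin n) → Fin T → Fin k // Causal f}

/-- Probability of the i.i.d. arrival sequence `q` under the arrival distribution `P`. -/
noncomputable def seqProb {n : ℕ} (T : ℕ) (P : Fin n → ℝ) (q : Fin T → Fin n) : ℝ :=
  ∏ t : Fin T, P (q t)

/-- Expected reward of the algorithm `A`. -/
noncomputable def expReward {k n : ℕ} (T τ : ℕ) (P : Fin n → ℝ) (μ : Fin n → Fin k → ℝ)
    (δ : Fin k → ℕ) (A : Alg k n T) : ℝ :=
  ∑ q : Fin T → Fin n, seqProb T P q * seqReward T τ μ δ (A.1 q) q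

/-- The optimal expected reward: the value of the benchmark `OPT`. -/
noncomputable def optReward (k n T τ : ℕ) (P : Fin n → ℝ) (μ : Fin n → Fin k → ℝ)
    (δ : Fin k → ℕ) : ℝ :=
  ⨆ A : Alg k n T, expReward T τ P μ δ A

/-- Property 1 (phase independence): whenever the type prefixes of two phases agree, the
algorithm's pulls at the corresponding rounds agree. -/
def PhaseInd {k n T : ℕ} (τ : ℕ) (A : Alg k n T) : Prop :=
  ∀ q : Fin T → Fin n, ∀ i j s : ℕ, s < τ →
    ∀ (hi : i * τ + s < T) (hj : j * τ + s < T),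
      (∀ l : ℕ, l ≤ s → ∀ (hli : i * τ + l < T) (hlj : j * τ + l < T),
          q ⟨i * τ + l, hli⟩ = q ⟨j * τ + l, hlj⟩) →
      A.1 q ⟨i * τ + s, hi⟩ = A.1 q ⟨j * τ + s, hj⟩

/-- Property 2 (commitment to `Z`): the algorithm pulls only arms of `Z` and, with
probability 1, every arm of `Z` receives at least its exposure threshold in every phase. -/
def Committed {k n T : ℕ} (τ : ℕ) (δ : Fin k → ℕ) (Z : Finset (Fin k)) (A : Alg k n T) : Prop :=
  ∀ q : Fin T → Fin n,
    (∀ t : Fin T, A.1 q t ∈ Z) ∧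
    (∀ j : ℕ, (j + 1) * τ ≤ T → ∀ a ∈ Z, δ a ≤ pullsInPhase T τ (A.1 q) j a)

/-- The value of `PICO`: the best expected reward among phase-independent algorithms committed
to some subset of the arms. -/
noncomputable def picoReward (k n T τ : ℕ) (P : Fin n → ℝ) (μ : Fin n → Fin k → ℝ)
    (δ : Fin k → ℕ) : ℝ :=
  ⨆ A : {A : Alg k n T // PhaseInd τ A ∧ ∃ Z : Finset (Fin k), Committed τ δ Z A},
    expReward T τ P μ δ A.1

/-- Expected first-phase reward of the algorithm `A` (for committed algorithms this is
`E_{q ∼ P^τ}[r_{1:τ}^A(q)]`). -/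
noncomputable def expFirstPhase (k n T τ : ℕ) (P : Fin n → ℝ) (μ : Fin n → Fin k → ℝ)
    (A : Alg k n T) : ℝ :=
  ∑ q : Fin T → Fin n, seqProb T P q *
    ∑ t ∈ Finset.univ.filter (fun t : Fin T => (t : ℕ) < τ), μ (q t) (A.1 q t)

/-- The expected first-phase reward of `PICO(Z)`: the best expected first-phase reward over
phase-independent algorithms committed to `Z`. -/
noncomputable def picoZReward (k n T τ : ℕ) (P : Fin n → ℝ) (μ : Fin n → Fin k → ℝ)
    (δ : Fin k → ℕ) (Z : Finset (Fin k)) : ℝ :=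
  ⨆ A : {A : Alg k n T // PhaseInd τ A ∧ Committed τ δ Z A},
    expFirstPhase k n T τ P μ A.1

/-- Auxiliary recursion for `MER`, by the number of remaining rounds in the phase. -/
noncomputable def MERaux {k n : ℕ} (P : Fin n → ℝ) (μ : Fin n → Fin k → ℝ)
    (δ : Fin k → ℕ) (Z : Finset (Fin k)) : ℕ → Multiset (Fin k) → EReal
  | 0, H => if ∀ a ∈ Z, δ a ≤ H.count a then (0 : EReal) else (⊥ : EReal)
  | (r + 1), H =>
      ∑ u : Fin n, (P u : EReal) *
        (Z.sup fun a => ((μ u a : ℝ) : EReal) + MERaux P μ δ Z r (a ::ₘ H))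

/-- The maximum expected remaining reward function `MER(H, Z)`: if `|H| = τ` it is `0` when
every arm of `Z` meets its exposure constraint in `H` and `−∞` otherwise; if `|H| < τ` it is
`E_{u∼P}[max_{a∈Z}(μ_{u,a} + MER(H ∪ {a}, Z))]`. -/
noncomputable def MER {k n : ℕ} (τ : ℕ) (P : Fin n → ℝ) (μ : Fin n → Fin k → ℝ)
    (δ : Fin k → ℕ) (Z : Finset (Fin k)) (H : Multiset (Fin k)) : EReal :=
  MERaux P μ δ Z (τ - Multiset.card H) H

/-- The phase history at round `t`: the multiset of arms pulled so far in the current phase. -/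
def phaseHist {k T : ℕ} (τ : ℕ) (pull : Fin T → Fin k) (t : Fin T) : Multiset (Fin k) :=
  ((Finset.univ.filter (fun s : Fin T =>
      ((t : ℕ) / τ) * τ ≤ (s : ℕ) ∧ (s : ℕ) < (t : ℕ))).val.map pull)


section Aux
variable {k n : ℕ}

/-- total deficit of a history w.r.t. exposure thresholds -/
def need (δ : Fin k → ℕ) (Z : Finset (Fin k)) (H : Multiset (Fin k)) : ℕ :=
  ∑ a ∈ Z, (δ a - H.count a)

lemma need_zero (δ : Fin k → ℕ) (Z : Finset (Fin k)) : need δ Z 0 = ∑ a ∈ Z, δ a := by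
  simp [need]

lemma need_eq_zero_iff {δ : Fin k → ℕ} {Z : Finset (Fin k)} {H : Multiset (Fin k)} :
    need δ Z H = 0 ↔ ∀ a ∈ Z, δ a ≤ H.count a := by
  simp [need, Finset.sum_eq_zero_iff, Nat.sub_eq_zero_iff_le]

lemma need_cons_le (δ : Fin k → ℕ) (Z : Finset (Fin k)) (a : Fin k) (H : Multiset (Fin k)) :
    need δ Z (a ::ₘ H) ≤ need δ Z H := by
  refine Finset.sum_le_sum fun b _ => Nat.sub_le_sub_left ?_ _
  rw [Multiset.count_cons]
  exact Nat.le_add_right _ _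

lemma need_cons_of_lt {δ : Fin k → ℕ} {Z : Finset (Fin k)} {a : Fin k} {H : Multiset (Fin k)}
    (ha : a ∈ Z) (h : H.count a < δ a) : need δ Z (a ::ₘ H) = need δ Z H - 1 := by
  classical
  unfold need
  rw [← Finset.add_sum_erase _ _ ha, ← Finset.add_sum_erase _ _ ha]
  have h1 : ∑ b ∈ Z.erase a, (δ b - (a ::ₘ H).count b) = ∑ b ∈ Z.erase a, (δ b - H.count b) := by
    refine Finset.sum_congr rfl fun b hb => ?_
    rw [Multiset.count_cons, if_neg (Finset.ne_of_mem_erase hb), Nat.add_zero]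
  rw [h1, Multiset.count_cons_self]
  omega

lemma exists_need_cons_le {δ : Fin k → ℕ} {Z : Finset (Fin k)} {H : Multiset (Fin k)} {r : ℕ}
    (hZ : Z.Nonempty) (h : need δ Z H ≤ r + 1) : ∃ a ∈ Z, need δ Z (a ::ₘ H) ≤ r := by
  by_cases h0 : need δ Z H = 0
  · obtain ⟨a, ha⟩ := hZ
    exact ⟨a, ha, le_trans (le_trans (need_cons_le δ Z a H) h0.le) (Nat.zero_le r)⟩
  · have : ∃ a ∈ Z, δ a - H.count a ≠ 0 := by
      by_contra hc
      push_neg at hc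
      exact h0 (Finset.sum_eq_zero hc)
    obtain ⟨a, ha, hpos⟩ := this
    refine ⟨a, ha, ?_⟩
    rw [need_cons_of_lt ha (by omega)]
    omega

lemma need_cons_ge {δ : Fin k → ℕ} {Z : Finset (Fin k)} (a : Fin k) (H : Multiset (Fin k)) :
    need δ Z H - 1 ≤ need δ Z (a ::ₘ H) := by
  classical
  refine le_trans ?_ (Nat.le_refl _)
  unfold need
  have : ∀ b ∈ Z, (δ b - H.count b) ≤ (δ b - (a ::ₘ H).count b) +
      (if b = a then 1 else 0) := by
    intro b _
    rw [Multiset.count_cons]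
    split <;> omega
  calc (∑ b ∈ Z, (δ b - H.count b)) - 1
      ≤ (∑ b ∈ Z, ((δ b - (a ::ₘ H).count b) + if b = a then 1 else 0)) - 1 :=
        Nat.sub_le_sub_right (Finset.sum_le_sum this) 1
    _ ≤ (∑ b ∈ Z, (δ b - (a ::ₘ H).count b)) + (∑ b ∈ Z, if b = a then 1 else 0) - 1 := by
        rw [Finset.sum_add_distrib]
    _ ≤ _ := by
        have : (∑ b ∈ Z, if b = a then 1 else 0) ≤ 1 := by
          rw [Finset.sum_ite_eq' Z a (fun _ => 1)]
          split <;> omega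
        omega

end Aux

lemma ereal_coe_mul_add {c : ℝ} (hc : 0 ≤ c) (x y : EReal) :
    (c : EReal) * (x + y) = c * x + c * y := by
  rcases eq_or_lt_of_le hc with h | h
  · simp [← h]
  · induction x with
    | bot => simp [EReal.bot_add, EReal.coe_mul_bot_of_pos h,
        EReal.bot_add]
    | top => induction y with
      | bot => simp [EReal.add_bot, EReal.coe_mul_bot_of_pos h, EReal.coe_mul_top_of_pos h]
      | top => simp [EReal.coe_mul_top_of_pos h]
      | coe y => rw [EReal.top_add_coe, EReal.coe_mul_top_of_pos h, ← EReal.coe_mul,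
          EReal.top_add_coe]
    | coe x => induction y with
      | bot => simp [EReal.add_bot, EReal.coe_mul_bot_of_pos h]
      | top => simp [EReal.coe_add_top, EReal.coe_mul_top_of_pos h, ← EReal.coe_mul]
      | coe y => norm_cast; ring

lemma ereal_coe_mul_sum {ι : Type*} (s : Finset ι) {c : ℝ} (hc : 0 ≤ c) (f : ι → EReal) :
    (c : EReal) * ∑ i ∈ s, f i = ∑ i ∈ s, (c : EReal) * f i := by
  classical
  induction s using Finset.induction with
  | empty => simp
  | insert _ _ hns ih =>
      rw [Finset.sum_insert hns, Finset.sum_insert hns, ereal_coe_mul_add hc, ih]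

lemma ereal_sum_coe_mul {ι : Type*} (s : Finset ι) (w : ι → ℝ) (hw : ∀ i ∈ s, 0 ≤ w i)
    (c : EReal) : ∑ i ∈ s, (w i : EReal) * c = ((∑ i ∈ s, w i : ℝ) : EReal) * c := by
  classical
  induction s using Finset.induction with
  | empty => simp
  | @insert a s hns ih =>
      rw [Finset.sum_insert hns, Finset.sum_insert hns, ih (fun i hi => hw i (Finset.mem_insert_of_mem hi)),
        EReal.coe_add, EReal.right_distrib_of_nonneg (by exact_mod_cast hw a (Finset.mem_insert_self a s))
          (by exact_mod_cast Finset.sum_nonneg (fun i hi => hw i (Finset.mem_insert_of_mem hi)))]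

lemma ereal_sum_eq_bot {ι : Type*} (s : Finset ι) (f : ι → EReal) {i0 : ι} (hi0 : i0 ∈ s)
    (h : f i0 = ⊥) : ∑ i ∈ s, f i = ⊥ := by
  classical
  rw [← Finset.add_sum_erase s f hi0, h, EReal.bot_add]


section MERlemmas
variable {k n : ℕ} (P : Fin n → ℝ) (μ : Fin n → Fin k → ℝ) (δ : Fin k → ℕ) (Z : Finset (Fin k))

lemma MERaux_le (hP : ∀ u, 0 ≤ P u) (hPsum : ∑ u, P u = 1) (hμ : ∀ u a, μ u a ≤ 1) :
    ∀ (r : ℕ) (H : Multiset (Fin k)), MERaux P μ δ Z r H ≤ ((r : ℝ) : EReal) := by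
  intro r
  induction r with
  | zero =>
      intro H
      simp only [MERaux]
      split <;> simp
  | succ r ih =>
      intro H
      have hsup : ∀ u, (Z.sup fun a => ((μ u a : ℝ) : EReal) + MERaux P μ δ Z r (a ::ₘ H))
          ≤ ((1 + r : ℝ) : EReal) := by
        intro u
        refine Finset.sup_le fun a _ => ?_
        rw [EReal.coe_add]
        exact add_le_add (EReal.coe_le_coe_iff.2 (hμ u a)) (ih (a ::ₘ H))
      calc MERaux P μ δ Z (r + 1) H
          = ∑ u, ((P u : ℝ) : EReal) *
              (Z.sup fun a => ((μ u a : ℝ) : EReal) + MERaux P μ δ Z r (a ::ₘ H)) := rfl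
        _ ≤ ∑ u, ((P u : ℝ) : EReal) * ((1 + r : ℝ) : EReal) :=
            Finset.sum_le_sum fun u _ =>
              mul_le_mul_of_nonneg_left (hsup u) (by exact_mod_cast hP u)
        _ = ((∑ u, P u : ℝ) : EReal) * ((1 + r : ℝ) : EReal) :=
            ereal_sum_coe_mul _ _ (fun u _ => hP u) _
        _ = (((r + 1 : ℕ) : ℝ) : EReal) := by
            rw [hPsum]; push_cast; rw [one_mul]; norm_num [add_comm]

lemma MERaux_ne_top (hP : ∀ u, 0 ≤ P u) (hPsum : ∑ u, P u = 1) (hμ : ∀ u a, μ u a ≤ 1)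
    (r : ℕ) (H : Multiset (Fin k)) : MERaux P μ δ Z r H ≠ ⊤ :=
  ne_top_of_le_ne_top (EReal.coe_ne_top _) (MERaux_le P μ δ Z hP hPsum hμ r H)

lemma MERaux_bot (hn : 0 < n) (hP : ∀ u, 0 < P u) :
    ∀ (r : ℕ) (H : Multiset (Fin k)), r < need δ Z H → MERaux P μ δ Z r H = ⊥ := by
  intro r
  induction r with
  | zero =>
      intro H hH
      simp only [MERaux]
      rw [if_neg]
      intro hc
      rw [← need_eq_zero_iff (δ := δ) (Z := Z) (H := H)] at hc
      omega
  | succ r ih =>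
      intro H hH
      have hsup : ∀ u, (Z.sup fun a => ((μ u a : ℝ) : EReal) + MERaux P μ δ Z r (a ::ₘ H))
          = (⊥ : EReal) := by
        intro u
        refine le_bot_iff.mp (Finset.sup_le fun a _ => ?_)
        rw [ih (a ::ₘ H) (by have := need_cons_ge (δ := δ) (Z := Z) a H; omega),
          EReal.add_bot]
      have : ∀ u : Fin n, ((P u : ℝ) : EReal) *
          (Z.sup fun a => ((μ u a : ℝ) : EReal) + MERaux P μ δ Z r (a ::ₘ H)) = ⊥ := by
        intro u
        rw [hsup u, EReal.coe_mul_bot_of_pos (hP u)]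
      exact ereal_sum_eq_bot Finset.univ _ (Finset.mem_univ (⟨0, hn⟩ : Fin n)) (this _)

lemma MERaux_nonneg (hP : ∀ u, 0 ≤ P u) (hμ0 : ∀ u a, 0 ≤ μ u a) (hZ : Z.Nonempty) :
    ∀ (r : ℕ) (H : Multiset (Fin k)), need δ Z H ≤ r → 0 ≤ MERaux P μ δ Z r H := by
  intro r
  induction r with
  | zero =>
      intro H hH
      simp only [MERaux]
      rw [if_pos (need_eq_zero_iff.mp (Nat.le_zero.mp hH))]
  | succ r ih =>
      intro H hH
      obtain ⟨a, ha, hle⟩ := exists_need_cons_le hZ hH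
      have hterm : ∀ u, (0 : EReal) ≤
          Z.sup fun b => ((μ u b : ℝ) : EReal) + MERaux P μ δ Z r (b ::ₘ H) := by
        intro u
        refine le_trans ?_ (Finset.le_sup (f := fun b =>
          ((μ u b : ℝ) : EReal) + MERaux P μ δ Z r (b ::ₘ H)) ha)
        exact add_nonneg (by exact_mod_cast hμ0 u a) (ih _ hle)
      exact Finset.sum_nonneg fun u _ =>
        mul_nonneg (by exact_mod_cast hP u) (hterm u)

end MERlemmas

section Cond
variable {k n : ℕ}

lemma seqProb_nonneg {T : ℕ} (P : Fin n → ℝ) (hP : ∀ u, 0 ≤ P u) (q : Fin T → Fin n) :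
    0 ≤ seqProb T P q := Finset.prod_nonneg fun t _ => hP (q t)

lemma seqProb_pos {T : ℕ} (P : Fin n → ℝ) (hP : ∀ u, 0 < P u) (q : Fin T → Fin n) :
    0 < seqProb T P q := Finset.prod_pos fun t _ => hP (q t)

lemma sum_seqProb {T : ℕ} (P : Fin n → ℝ) (hPsum : ∑ u, P u = 1) :
    ∑ q : Fin T → Fin n, seqProb T P q = 1 := by
  classical
  have h := Finset.prod_univ_sum (fun _ : Fin T => (Finset.univ : Finset (Fin n)))
    (fun _ u => P u)
  rw [Fintype.piFinset_univ] at h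
  unfold seqProb
  rw [← h]
  simp [hPsum]

lemma seqProb_eq_mul {T : ℕ} (P : Fin n → ℝ) (t0 : Fin T) (q : Fin T → Fin n) :
    seqProb T P q = P (q t0) * ∏ j : {j : Fin T // j ≠ t0}, P (q j) := by
  classical
  rw [seqProb, ← Finset.mul_prod_erase Finset.univ _ (Finset.mem_univ t0)]
  congr 1
  rw [Finset.prod_subtype (Finset.univ.erase t0)
    (p := fun j : Fin T => j ≠ t0) (by simp [Finset.mem_erase]) (fun t => P (q t))]

lemma cond_step {T : ℕ} (hn : 0 < n) (P : Fin n → ℝ) (hP : ∀ u, 0 ≤ P u)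
    (hPsum : ∑ u, P u = 1) (t0 : Fin T) (F : (Fin T → Fin n) → Fin n → EReal)
    (hF : ∀ q q' u, (∀ s, s ≠ t0 → q s = q' s) → F q u = F q' u) :
    ∑ q : Fin T → Fin n, ((seqProb T P q : ℝ) : EReal) * F q (q t0)
      = ∑ q : Fin T → Fin n, ((seqProb T P q : ℝ) : EReal) * ∑ u, ((P u : ℝ) : EReal) * F q u := by
  classical
  rw [← Equiv.sum_comp ((Equiv.funSplitAt t0 (Fin n)).symm)
      (fun q => ((seqProb T P q : ℝ) : EReal) * F q (q t0)),
    ← Equiv.sum_comp ((Equiv.funSplitAt t0 (Fin n)).symm)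
      (fun q => ((seqProb T P q : ℝ) : EReal) * ∑ u, ((P u : ℝ) : EReal) * F q u),
    Fintype.sum_prod_type, Fintype.sum_prod_type]
  rw [Finset.sum_comm, Finset.sum_comm (s := Finset.univ) (t := Finset.univ)
    (f := fun v rest => ((seqProb T P ((Equiv.funSplitAt t0 (Fin n)).symm (v, rest)) : ℝ) : EReal)
      * ∑ u, ((P u : ℝ) : EReal) * F ((Equiv.funSplitAt t0 (Fin n)).symm (v, rest)) u)]
  refine Finset.sum_congr rfl fun rest _ => ?_
  have hv0 : (0 : ℕ) < n := hn
  set q0 : Fin T → Fin n := (Equiv.funSplitAt t0 (Fin n)).symm (⟨0, hv0⟩, rest) with hq0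
  have happ : ∀ (v : Fin n) (j : Fin T) (hj : j ≠ t0),
      (Equiv.funSplitAt t0 (Fin n)).symm (v, rest) j = rest ⟨j, hj⟩ := by
    intro v j hj; simp [hj]
  have happ0 : ∀ v : Fin n, (Equiv.funSplitAt t0 (Fin n)).symm (v, rest) t0 = v := by
    intro v; simp
  have hFq : ∀ v u : Fin n, F ((Equiv.funSplitAt t0 (Fin n)).symm (v, rest)) u = F q0 u := by
    intro v u
    refine hF _ _ u fun s hs => ?_
    rw [happ v s hs, hq0, happ _ s hs]
  set W : ℝ := ∏ j : {j : Fin T // j ≠ t0}, P (rest j) with hW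
  have hW0 : 0 ≤ W := Finset.prod_nonneg fun j _ => hP _
  have hprob : ∀ v : Fin n,
      seqProb T P ((Equiv.funSplitAt t0 (Fin n)).symm (v, rest)) = P v * W := by
    intro v
    rw [seqProb_eq_mul P t0, happ0 v]
    congr 1
    refine Finset.prod_congr rfl fun j _ => ?_
    rw [happ v j j.2]
  have hLHS : ∑ v : Fin n, ((seqProb T P ((Equiv.funSplitAt t0 (Fin n)).symm (v, rest)) : ℝ) : EReal)
        * F ((Equiv.funSplitAt t0 (Fin n)).symm (v, rest))
            ((Equiv.funSplitAt t0 (Fin n)).symm (v, rest) t0)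
      = (W : EReal) * ∑ v : Fin n, ((P v : ℝ) : EReal) * F q0 v := by
    rw [ereal_coe_mul_sum _ hW0]
    refine Finset.sum_congr rfl fun v _ => ?_
    rw [hprob v, happ0 v, hFq v v, EReal.coe_mul, mul_comm ((P v : ℝ) : EReal) _, mul_assoc]
  have hsum2 : ∀ v : Fin n,
      (∑ u, ((P u : ℝ) : EReal) * F ((Equiv.funSplitAt t0 (Fin n)).symm (v, rest)) u)
        = ∑ u, ((P u : ℝ) : EReal) * F q0 u :=
    fun v => Finset.sum_congr rfl fun u _ => by rw [hFq v u]
  have hRHS : ∑ v : Fin n, ((seqProb T P ((Equiv.funSplitAt t0 (Fin n)).symm (v, rest)) : ℝ) : EReal)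
        * ∑ u, ((P u : ℝ) : EReal) * F ((Equiv.funSplitAt t0 (Fin n)).symm (v, rest)) u
      = (W : EReal) * ∑ u, ((P u : ℝ) : EReal) * F q0 u := by
    rw [Finset.sum_congr rfl (fun v _ => by rw [hsum2 v, hprob v] :
      ∀ v ∈ Finset.univ, ((seqProb T P ((Equiv.funSplitAt t0 (Fin n)).symm (v, rest)) : ℝ) : EReal)
        * ∑ u, ((P u : ℝ) : EReal) * F ((Equiv.funSplitAt t0 (Fin n)).symm (v, rest)) u
        = ((P v * W : ℝ) : EReal) * ∑ u, ((P u : ℝ) : EReal) * F q0 u)]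
    rw [ereal_sum_coe_mul _ _ (fun v _ => mul_nonneg (hP v) hW0), ← Finset.sum_mul, hPsum, one_mul]
  rw [hLHS, hRHS]

end Cond

section PhiDef
variable {k n : ℕ}

/-- history of pulls among the first `r` rounds -/
def histr {k : ℕ} (T r : ℕ) (pull : Fin T → Fin k) : Multiset (Fin k) :=
  ((Finset.univ.filter (fun t : Fin T => (t : ℕ) < r)).val.map pull)

/-- reward collected in the first `r` rounds -/
def rewr (T r : ℕ) (μ : Fin n → Fin k → ℝ) (pull : Fin T → Fin k) (q : Fin T → Fin n) : ℝ :=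
  ∑ t ∈ Finset.univ.filter (fun t : Fin T => (t : ℕ) < r), μ (q t) (pull t)

noncomputable def Phi (T τ : ℕ) (P : Fin n → ℝ) (μ : Fin n → Fin k → ℝ) (δ : Fin k → ℕ)
    (Z : Finset (Fin k)) (A : Alg k n T) (r : ℕ) : EReal :=
  ∑ q : Fin T → Fin n, ((seqProb T P q : ℝ) : EReal) *
    (((rewr T r μ (A.1 q) q : ℝ) : EReal) + MERaux P μ δ Z (τ - r) (histr T r (A.1 q)))

lemma filter_lt_zero (T : ℕ) :
    (Finset.univ.filter (fun t : Fin T => (t : ℕ) < 0)) = ∅ := by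
  ext t; simp

lemma filter_lt_succ (T r : ℕ) (hr : r < T) :
    (Finset.univ.filter (fun t : Fin T => (t : ℕ) < r + 1))
      = insert ⟨r, hr⟩ (Finset.univ.filter (fun t : Fin T => (t : ℕ) < r)) := by
  ext t
  simp only [Finset.mem_filter, Finset.mem_insert, Finset.mem_univ, true_and]
  constructor
  · intro h
    rcases Nat.lt_succ_iff_lt_or_eq.mp h with h | h
    · exact Or.inr h
    · exact Or.inl (Fin.ext h)
  · rintro (rfl | h)
    · exact Nat.lt_succ_self r
    · exact Nat.lt_succ_of_lt h

lemma self_not_mem_filter_lt (T r : ℕ) (hr : r < T) :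
    (⟨r, hr⟩ : Fin T) ∉ (Finset.univ.filter (fun t : Fin T => (t : ℕ) < r)) := by
  simp

lemma card_filter_lt (T : ℕ) : ∀ r : ℕ, r ≤ T →
    (Finset.univ.filter (fun t : Fin T => (t : ℕ) < r)).card = r := by
  intro r
  induction r with
  | zero => intro _; rw [filter_lt_zero]; rfl
  | succ r ih =>
      intro hr
      rw [filter_lt_succ T r hr, Finset.card_insert_of_notMem (self_not_mem_filter_lt T r hr),
        ih (le_of_lt hr)]

lemma histr_zero (T : ℕ) (pull : Fin T → Fin k) : histr T 0 pull = 0 := by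
  rw [histr, filter_lt_zero]; rfl

lemma histr_succ (T r : ℕ) (hr : r < T) (pull : Fin T → Fin k) :
    histr T (r + 1) pull = pull ⟨r, hr⟩ ::ₘ histr T r pull := by
  rw [histr, histr, filter_lt_succ T r hr, Finset.insert_val,
    Multiset.ndinsert_of_notMem (by simpa using self_not_mem_filter_lt T r hr),
    Multiset.map_cons]

lemma card_histr (T r : ℕ) (hr : r ≤ T) (pull : Fin T → Fin k) :
    Multiset.card (histr T r pull) = r := by
  rw [histr, Multiset.card_map, ← Finset.card_def, card_filter_lt T r hr]

lemma count_histr (T r : ℕ) (pull : Fin T → Fin k) (a : Fin k) :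
    (histr T r pull).count a
      = (Finset.univ.filter (fun t : Fin T => (t : ℕ) < r ∧ pull t = a)).card := by
  classical
  rw [histr, Multiset.count_map]
  rw [← Finset.filter_filter]
  congr 1
  refine Multiset.filter_congr fun t _ => ?_
  constructor
  · intro h; exact h.symm
  · intro h; exact h.symm

lemma rewr_zero (T : ℕ) (μ : Fin n → Fin k → ℝ) (pull : Fin T → Fin k) (q : Fin T → Fin n) :
    rewr T 0 μ pull q = 0 := by
  rw [rewr, filter_lt_zero, Finset.sum_empty]

lemma rewr_succ (T r : ℕ) (hr : r < T) (μ : Fin n → Fin k → ℝ) (pull : Fin T → Fin k)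
    (q : Fin T → Fin n) :
    rewr T (r + 1) μ pull q = rewr T r μ pull q + μ (q ⟨r, hr⟩) (pull ⟨r, hr⟩) := by
  rw [rewr, rewr, filter_lt_succ T r hr, Finset.sum_insert (self_not_mem_filter_lt T r hr),
    add_comm]

end PhiDef

section PhiLemmas
variable {k n : ℕ} (T τ : ℕ) (P : Fin n → ℝ) (μ : Fin n → Fin k → ℝ) (δ : Fin k → ℕ)
  (Z : Finset (Fin k))

lemma ereal_coe_sum {ι : Type*} (s : Finset ι) (f : ι → ℝ) :
    ((∑ i ∈ s, f i : ℝ) : EReal) = ∑ i ∈ s, ((f i : ℝ) : EReal) := by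
  classical
  induction s using Finset.induction with
  | empty => simp
  | insert _ _ hns ih => rw [Finset.sum_insert hns, Finset.sum_insert hns, EReal.coe_add, ih]

lemma causal_agree {T : ℕ} (A : Alg k n T) (q q' : Fin T → Fin n) (r : ℕ)
    (h : ∀ s : Fin T, (s : ℕ) < r → q s = q' s) :
    ∀ t : Fin T, (t : ℕ) < r → A.1 q t = A.1 q' t := fun t ht =>
  A.2 q q' t (fun s hs => h s (lt_of_le_of_lt hs ht))

lemma rewr_congr {T : ℕ} (A : Alg k n T) (q q' : Fin T → Fin n) (r : ℕ)
    (h : ∀ s : Fin T, (s : ℕ) < r → q s = q' s) :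
    rewr T r μ (A.1 q) q = rewr T r μ (A.1 q') q' := by
  refine Finset.sum_congr rfl fun t ht => ?_
  have ht' : (t : ℕ) < r := (Finset.mem_filter.mp ht).2
  rw [h t ht', causal_agree A q q' r h t ht']

lemma histr_congr {T : ℕ} (A : Alg k n T) (q q' : Fin T → Fin n) (r : ℕ)
    (h : ∀ s : Fin T, (s : ℕ) < r → q s = q' s) :
    histr T r (A.1 q) = histr T r (A.1 q') := by
  refine Multiset.map_congr rfl fun t ht => ?_
  have ht' : (t : ℕ) < r := by
    have := Finset.mem_filter.mp (Finset.mem_def.mpr ht)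
    exact this.2
  exact causal_agree A q q' r h t ht'

lemma Phi_zero (hP : ∀ u, 0 ≤ P u) (hPsum : ∑ u, P u = 1) (A : Alg k n T) :
    Phi T τ P μ δ Z A 0 = MERaux P μ δ Z τ 0 := by
  unfold Phi
  simp only [rewr_zero, histr_zero, Nat.sub_zero, EReal.coe_zero, zero_add]
  rw [ereal_sum_coe_mul Finset.univ (seqProb T P) (fun q _ => seqProb_nonneg P hP q),
    sum_seqProb P hPsum, EReal.coe_one, one_mul]

lemma Phi_succ (r : ℕ) (hrτ : r < τ) (hrT : r < T) (A : Alg k n T) :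
    Phi T τ P μ δ Z A (r + 1)
      = ∑ q : Fin T → Fin n, ((seqProb T P q : ℝ) : EReal) *
          (((rewr T r μ (A.1 q) q : ℝ) : EReal) +
            (((μ (q ⟨r, hrT⟩) (A.1 q ⟨r, hrT⟩) : ℝ) : EReal) +
              MERaux P μ δ Z (τ - (r + 1)) (A.1 q ⟨r, hrT⟩ ::ₘ histr T r (A.1 q)))) := by
  unfold Phi
  refine Finset.sum_congr rfl fun q _ => ?_
  rw [rewr_succ T r hrT, histr_succ T r hrT, EReal.coe_add, add_assoc]

lemma Phi_cond (hn : 0 < n) (hP : ∀ u, 0 ≤ P u) (hPsum : ∑ u, P u = 1)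
    (r : ℕ) (hrτ : r < τ) (hrT : r < T) (A : Alg k n T) :
    Phi T τ P μ δ Z A r
      = ∑ q : Fin T → Fin n, ((seqProb T P q : ℝ) : EReal) *
          (((rewr T r μ (A.1 q) q : ℝ) : EReal) +
            Z.sup (fun a => ((μ (q ⟨r, hrT⟩) a : ℝ) : EReal) +
              MERaux P μ δ Z (τ - (r + 1)) (a ::ₘ histr T r (A.1 q)))) := by
  classical
  have hur : τ - r = (τ - (r + 1)) + 1 := by omega
  have hstepA : ∀ (S : ℝ) (G : Fin n → EReal),
      ((S : ℝ) : EReal) + ∑ u, ((P u : ℝ) : EReal) * G u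
        = ∑ u, ((P u : ℝ) : EReal) * (((S : ℝ) : EReal) + G u) := by
    intro S G
    have h1 : ∀ u : Fin n, ((P u : ℝ) : EReal) * (((S : ℝ) : EReal) + G u)
        = ((P u : ℝ) : EReal) * ((S : ℝ) : EReal) + ((P u : ℝ) : EReal) * G u :=
      fun u => ereal_coe_mul_add (hP u) _ _
    rw [Finset.sum_congr rfl fun u _ => h1 u, Finset.sum_add_distrib,
      ereal_sum_coe_mul Finset.univ P (fun u _ => hP u), hPsum, EReal.coe_one, one_mul]
  have hMER : ∀ q : Fin T → Fin n, MERaux P μ δ Z (τ - r) (histr T r (A.1 q))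
      = ∑ u, ((P u : ℝ) : EReal) * Z.sup (fun a => ((μ u a : ℝ) : EReal) +
          MERaux P μ δ Z (τ - (r + 1)) (a ::ₘ histr T r (A.1 q))) := by
    intro q
    rw [hur]
    rfl
  set F : (Fin T → Fin n) → Fin n → EReal := fun q u =>
    ((rewr T r μ (A.1 q) q : ℝ) : EReal) +
      Z.sup (fun a => ((μ u a : ℝ) : EReal) +
        MERaux P μ δ Z (τ - (r + 1)) (a ::ₘ histr T r (A.1 q))) with hFdef
  have hF : ∀ q q' u, (∀ s, s ≠ (⟨r, hrT⟩ : Fin T) → q s = q' s) → F q u = F q' u := by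
    intro q q' u hqq
    have hlt : ∀ s : Fin T, (s : ℕ) < r → q s = q' s := by
      intro s hs
      exact hqq s (Fin.ne_of_val_ne (Nat.ne_of_lt hs))
    rw [hFdef]
    simp only
    rw [rewr_congr μ A q q' r hlt, histr_congr A q q' r hlt]
  calc Phi T τ P μ δ Z A r
      = ∑ q : Fin T → Fin n, ((seqProb T P q : ℝ) : EReal) * ∑ u, ((P u : ℝ) : EReal) * F q u := by
        unfold Phi
        refine Finset.sum_congr rfl fun q _ => ?_
        rw [hMER q, hstepA]
    _ = ∑ q : Fin T → Fin n, ((seqProb T P q : ℝ) : EReal) * F q (q ⟨r, hrT⟩) :=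
        (cond_step hn P hP hPsum ⟨r, hrT⟩ F hF).symm
    _ = _ := rfl

end PhiLemmas

section PhiMain
variable {k n : ℕ} (T τ : ℕ) (P : Fin n → ℝ) (μ : Fin n → Fin k → ℝ) (δ : Fin k → ℕ)
  (Z : Finset (Fin k))

lemma Phi_step_le (hn : 0 < n) (hP : ∀ u, 0 ≤ P u) (hPsum : ∑ u, P u = 1)
    (r : ℕ) (hrτ : r < τ) (hrT : r < T) (A : Alg k n T)
    (hmem : ∀ q : Fin T → Fin n, A.1 q ⟨r, hrT⟩ ∈ Z) :
    Phi T τ P μ δ Z A (r + 1) ≤ Phi T τ P μ δ Z A r := by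
  rw [Phi_succ T τ P μ δ Z r hrτ hrT A, Phi_cond T τ P μ δ Z hn hP hPsum r hrτ hrT A]
  refine Finset.sum_le_sum fun q _ => ?_
  refine mul_le_mul_of_nonneg_left (add_le_add le_rfl ?_) (by exact_mod_cast seqProb_nonneg P hP q)
  exact Finset.le_sup (f := fun a => ((μ (q ⟨r, hrT⟩) a : ℝ) : EReal) +
    MERaux P μ δ Z (τ - (r + 1)) (a ::ₘ histr T r (A.1 q))) (hmem q)

lemma Phi_step_eq (hn : 0 < n) (hP : ∀ u, 0 ≤ P u) (hPsum : ∑ u, P u = 1)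
    (r : ℕ) (hrτ : r < τ) (hrT : r < T) (A : Alg k n T)
    (hmem : ∀ q : Fin T → Fin n, A.1 q ⟨r, hrT⟩ ∈ Z)
    (hg : ∀ q : Fin T → Fin n, ∀ b ∈ Z,
      ((μ (q ⟨r, hrT⟩) b : ℝ) : EReal) + MERaux P μ δ Z (τ - (r + 1)) (b ::ₘ histr T r (A.1 q))
        ≤ ((μ (q ⟨r, hrT⟩) (A.1 q ⟨r, hrT⟩) : ℝ) : EReal) +
            MERaux P μ δ Z (τ - (r + 1)) (A.1 q ⟨r, hrT⟩ ::ₘ histr T r (A.1 q))) :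
    Phi T τ P μ δ Z A (r + 1) = Phi T τ P μ δ Z A r := by
  rw [Phi_succ T τ P μ δ Z r hrτ hrT A, Phi_cond T τ P μ δ Z hn hP hPsum r hrτ hrT A]
  refine Finset.sum_congr rfl fun q _ => ?_
  congr 2
  refine le_antisymm ?_ (Finset.sup_le fun b hb => hg q b hb)
  exact Finset.le_sup (f := fun a => ((μ (q ⟨r, hrT⟩) a : ℝ) : EReal) +
    MERaux P μ δ Z (τ - (r + 1)) (a ::ₘ histr T r (A.1 q))) (hmem q)

lemma Phi_chain_le (hn : 0 < n) (hP : ∀ u, 0 ≤ P u) (hPsum : ∑ u, P u = 1)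
    (hτT : τ ≤ T) (A : Alg k n T)
    (hmem : ∀ (q : Fin T → Fin n) (t : Fin T), (t : ℕ) < τ → A.1 q t ∈ Z) :
    Phi T τ P μ δ Z A τ ≤ Phi T τ P μ δ Z A 0 := by
  have key : ∀ j, j ≤ τ → Phi T τ P μ δ Z A τ ≤ Phi T τ P μ δ Z A (τ - j) := by
    intro j
    induction j with
    | zero => intro _; rw [Nat.sub_zero]
    | succ j ih =>
        intro hj
        have hr : τ - (j + 1) < τ := by omega
        have hrT : τ - (j + 1) < T := lt_of_lt_of_le hr hτT
        have hstep := Phi_step_le T τ P μ δ Z hn hP hPsum (τ - (j + 1)) hr hrT A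
          (fun q => hmem q ⟨τ - (j + 1), hrT⟩ hr)
        have heq : τ - (j + 1) + 1 = τ - j := by omega
        rw [heq] at hstep
        exact le_trans (ih (by omega)) hstep
  have := key τ le_rfl
  rwa [Nat.sub_self] at this

lemma Phi_chain_eq (hn : 0 < n) (hP : ∀ u, 0 ≤ P u) (hPsum : ∑ u, P u = 1)
    (hτT : τ ≤ T) (A : Alg k n T)
    (hmem : ∀ (q : Fin T → Fin n) (t : Fin T), (t : ℕ) < τ → A.1 q t ∈ Z)
    (hg : ∀ (q : Fin T → Fin n) (r : ℕ) (hrτ : r < τ) (hrT : r < T), ∀ b ∈ Z,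
      ((μ (q ⟨r, hrT⟩) b : ℝ) : EReal) + MERaux P μ δ Z (τ - (r + 1)) (b ::ₘ histr T r (A.1 q))
        ≤ ((μ (q ⟨r, hrT⟩) (A.1 q ⟨r, hrT⟩) : ℝ) : EReal) +
            MERaux P μ δ Z (τ - (r + 1)) (A.1 q ⟨r, hrT⟩ ::ₘ histr T r (A.1 q))) :
    Phi T τ P μ δ Z A τ = Phi T τ P μ δ Z A 0 := by
  have key : ∀ j, j ≤ τ → Phi T τ P μ δ Z A τ = Phi T τ P μ δ Z A (τ - j) := by
    intro j
    induction j with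
    | zero => intro _; rw [Nat.sub_zero]
    | succ j ih =>
        intro hj
        have hr : τ - (j + 1) < τ := by omega
        have hrT : τ - (j + 1) < T := lt_of_lt_of_le hr hτT
        have hstep := Phi_step_eq T τ P μ δ Z hn hP hPsum (τ - (j + 1)) hr hrT A
          (fun q => hmem q ⟨τ - (j + 1), hrT⟩ hr) (fun q => hg q (τ - (j + 1)) hr hrT)
        have heq : τ - (j + 1) + 1 = τ - j := by omega
        rw [heq] at hstep
        rw [ih (by omega), ← hstep]
  have := key τ le_rfl
  rwa [Nat.sub_self] at this

lemma Phi_tau (hP : ∀ u, 0 ≤ P u) (A : Alg k n T)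
    (hexp : ∀ q : Fin T → Fin n, ∀ a ∈ Z, δ a ≤ (histr T τ (A.1 q)).count a) :
    Phi T τ P μ δ Z A τ = ((expFirstPhase k n T τ P μ A : ℝ) : EReal) := by
  unfold Phi expFirstPhase
  rw [ereal_coe_sum]
  refine Finset.sum_congr rfl fun q _ => ?_
  rw [Nat.sub_self]
  have : MERaux P μ δ Z 0 (histr T τ (A.1 q)) = 0 := by
    simp only [MERaux]
    rw [if_pos (fun a ha => hexp q a ha)]
  rw [this, add_zero, ← EReal.coe_mul]
  rfl

end PhiMain

section MainLemmas
variable {k n : ℕ} (T τ : ℕ) (P : Fin n → ℝ) (μ : Fin n → Fin k → ℝ) (δ : Fin k → ℕ)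
  (Z : Finset (Fin k))

lemma MERaux_fin (hP : ∀ u, 0 < P u) (hPsum : ∑ u, P u = 1)
    (hμ : ∀ u a, 0 ≤ μ u a ∧ μ u a ≤ 1) (hZ : Z.Nonempty) {r : ℕ} {H : Multiset (Fin k)}
    (h : need δ Z H ≤ r) : ∃ x : ℝ, MERaux P μ δ Z r H = ((x : ℝ) : EReal) := by
  have h1 : (0 : EReal) ≤ MERaux P μ δ Z r H :=
    MERaux_nonneg P μ δ Z (fun u => (hP u).le) (fun u a => (hμ u a).1) hZ r H h
  have h2 : MERaux P μ δ Z r H ≠ ⊤ :=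
    MERaux_ne_top P μ δ Z (fun u => (hP u).le) hPsum (fun u a => (hμ u a).2) r H
  have h3 : MERaux P μ δ Z r H ≠ ⊥ := by
    intro hc
    rw [hc] at h1
    simp at h1
  exact ⟨(MERaux P μ δ Z r H).toReal, (EReal.coe_toReal h2 h3).symm⟩

lemma upper_main (hn : 0 < n) (hP : ∀ u, 0 ≤ P u) (hPsum : ∑ u, P u = 1)
    (hτT : τ ≤ T) (A : Alg k n T)
    (hmem : ∀ (q : Fin T → Fin n) (t : Fin T), (t : ℕ) < τ → A.1 q t ∈ Z)
    (hexp : ∀ q : Fin T → Fin n, ∀ a ∈ Z, δ a ≤ (histr T τ (A.1 q)).count a) :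
    ((expFirstPhase k n T τ P μ A : ℝ) : EReal) ≤ MERaux P μ δ Z τ 0 := by
  rw [← Phi_tau T τ P μ δ Z hP A hexp, ← Phi_zero T τ P μ δ Z hP hPsum A]
  exact Phi_chain_le T τ P μ δ Z hn hP hPsum hτT A hmem

lemma greedy_main (hn : 0 < n) (hP : ∀ u, 0 < P u) (hPsum : ∑ u, P u = 1)
    (hμ : ∀ u a, 0 ≤ μ u a ∧ μ u a ≤ 1) (hZ : Z.Nonempty) (hZfeas : ∑ a ∈ Z, δ a ≤ τ)
    (hτT : τ ≤ T) (A : Alg k n T)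
    (hmem : ∀ (q : Fin T → Fin n) (t : Fin T), (t : ℕ) < τ → A.1 q t ∈ Z)
    (hg : ∀ (q : Fin T → Fin n) (r : ℕ) (hrτ : r < τ) (hrT : r < T), ∀ b ∈ Z,
      ((μ (q ⟨r, hrT⟩) b : ℝ) : EReal) + MERaux P μ δ Z (τ - (r + 1)) (b ::ₘ histr T r (A.1 q))
        ≤ ((μ (q ⟨r, hrT⟩) (A.1 q ⟨r, hrT⟩) : ℝ) : EReal) +
            MERaux P μ δ Z (τ - (r + 1)) (A.1 q ⟨r, hrT⟩ ::ₘ histr T r (A.1 q))) :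
    ((expFirstPhase k n T τ P μ A : ℝ) : EReal) = MERaux P μ δ Z τ 0 := by
  have hP' : ∀ u, 0 ≤ P u := fun u => (hP u).le
  have hchain := Phi_chain_eq T τ P μ δ Z hn hP' hPsum hτT A hmem hg
  have hneed0 : need δ Z (0 : Multiset (Fin k)) ≤ τ := by rw [need_zero]; exact hZfeas
  obtain ⟨V, hV⟩ := MERaux_fin P μ δ Z hP hPsum hμ hZ hneed0
  have hexp : ∀ q : Fin T → Fin n, ∀ a ∈ Z, δ a ≤ (histr T τ (A.1 q)).count a := by
    by_contra hc
    push_neg at hc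
    obtain ⟨q0, a0, ha0, hcnt⟩ := hc
    have hbot : MERaux P μ δ Z 0 (histr T τ (A.1 q0)) = ⊥ := by
      simp only [MERaux]
      rw [if_neg]
      push_neg
      exact ⟨a0, ha0, hcnt⟩
    have hterm : ((seqProb T P q0 : ℝ) : EReal) *
        (((rewr T τ μ (A.1 q0) q0 : ℝ) : EReal) +
          MERaux P μ δ Z (τ - τ) (histr T τ (A.1 q0))) = ⊥ := by
      rw [Nat.sub_self, hbot, EReal.add_bot,
        EReal.coe_mul_bot_of_pos (seqProb_pos P hP q0)]
    have hPhibot : Phi T τ P μ δ Z A τ = ⊥ :=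
      ereal_sum_eq_bot Finset.univ _ (Finset.mem_univ q0) hterm
    rw [hchain, Phi_zero T τ P μ δ Z hP' hPsum A, hV] at hPhibot
    exact EReal.coe_ne_bot V hPhibot
  rw [← Phi_tau T τ P μ δ Z hP' A hexp, hchain, Phi_zero T τ P μ δ Z hP' hPsum A]

end MainLemmas

section DPAlg
variable {k n : ℕ} (τ : ℕ) (P : Fin n → ℝ) (μ : Fin n → Fin k → ℝ) (δ : Fin k → ℕ)
  (Z : Finset (Fin k))

/-- greedy argmax arm -/
noncomputable def best [NeZero k] (u : Fin n) (H : Multiset (Fin k)) : Fin k :=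
  if h : Z.Nonempty then
    (Finset.exists_mem_eq_sup' h (fun a => ((μ u a : ℝ) : EReal) +
      MERaux P μ δ Z (τ - (Multiset.card H + 1)) (a ::ₘ H))).choose
  else default

lemma best_mem [NeZero k] (hZ : Z.Nonempty) (u : Fin n) (H : Multiset (Fin k)) :
    best τ P μ δ Z u H ∈ Z := by
  rw [best, dif_pos hZ]
  exact (Finset.exists_mem_eq_sup' hZ _).choose_spec.1

lemma best_opt [NeZero k] (hZ : Z.Nonempty) (u : Fin n) (H : Multiset (Fin k)) :
    ∀ b ∈ Z, ((μ u b : ℝ) : EReal) + MERaux P μ δ Z (τ - (Multiset.card H + 1)) (b ::ₘ H)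
      ≤ ((μ u (best τ P μ δ Z u H) : ℝ) : EReal) +
          MERaux P μ δ Z (τ - (Multiset.card H + 1)) ((best τ P μ δ Z u H) ::ₘ H) := by
  intro b hb
  rw [best, dif_pos hZ]
  have hspec := (Finset.exists_mem_eq_sup' hZ (fun a => ((μ u a : ℝ) : EReal) +
    MERaux P μ δ Z (τ - (Multiset.card H + 1)) (a ::ₘ H))).choose_spec.2
  rw [← hspec]
  exact Finset.le_sup' (fun a => ((μ u a : ℝ) : EReal) +
    MERaux P μ δ Z (τ - (Multiset.card H + 1)) (a ::ₘ H)) hb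

/-- greedy phase history after `s` rounds with type sequence `f` -/
noncomputable def histUpTo [NeZero k] (f : ℕ → Fin n) : ℕ → Multiset (Fin k)
  | 0 => 0
  | s + 1 => best τ P μ δ Z (f s) (histUpTo f s) ::ₘ histUpTo f s

/-- greedy pull at step `s` -/
noncomputable def gstep [NeZero k] (f : ℕ → Fin n) (s : ℕ) : Fin k :=
  best τ P μ δ Z (f s) (histUpTo τ P μ δ Z f s)

lemma histUpTo_succ [NeZero k] (f : ℕ → Fin n) (s : ℕ) :
    histUpTo τ P μ δ Z f (s + 1) = gstep τ P μ δ Z f s ::ₘ histUpTo τ P μ δ Z f s := rfl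

lemma card_histUpTo [NeZero k] (f : ℕ → Fin n) :
    ∀ s, Multiset.card (histUpTo τ P μ δ Z f s) = s := by
  intro s
  induction s with
  | zero => rfl
  | succ s ih => rw [histUpTo_succ, Multiset.card_cons, ih]

lemma histUpTo_congr [NeZero k] (f g : ℕ → Fin n) :
    ∀ s, (∀ l, l < s → f l = g l) → histUpTo τ P μ δ Z f s = histUpTo τ P μ δ Z g s := by
  intro s
  induction s with
  | zero => intro _; rfl
  | succ s ih =>
      intro h
      rw [histUpTo_succ, histUpTo_succ, gstep, gstep,
        ih (fun l hl => h l (Nat.lt_succ_of_lt hl)), h s (Nat.lt_succ_self s)]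

lemma gstep_congr [NeZero k] (f g : ℕ → Fin n) (s : ℕ) (h : ∀ l, l ≤ s → f l = g l) :
    gstep τ P μ δ Z f s = gstep τ P μ δ Z g s := by
  rw [gstep, gstep, h s le_rfl,
    histUpTo_congr τ P μ δ Z f g s (fun l hl => h l (le_of_lt hl))]

lemma gstep_mem [NeZero k] (hZ : Z.Nonempty) (f : ℕ → Fin n) (s : ℕ) :
    gstep τ P μ δ Z f s ∈ Z := best_mem τ P μ δ Z hZ _ _

lemma need_histUpTo [NeZero k] (hn : 0 < n) (hP : ∀ u, 0 < P u) (hPsum : ∑ u, P u = 1)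
    (hμ : ∀ u a, 0 ≤ μ u a ∧ μ u a ≤ 1) (hZ : Z.Nonempty) (hZfeas : ∑ a ∈ Z, δ a ≤ τ)
    (f : ℕ → Fin n) : ∀ s, s ≤ τ → need δ Z (histUpTo τ P μ δ Z f s) ≤ τ - s := by
  intro s
  induction s with
  | zero =>
      intro _
      show need δ Z 0 ≤ τ - 0
      rw [need_zero, Nat.sub_zero]
      exact hZfeas
  | succ s ih =>
      intro hs
      have hsτ : s < τ := hs
      have ihs := ih (le_of_lt hsτ)
      set H := histUpTo τ P μ δ Z f s with hH
      obtain ⟨a, ha, hle⟩ := exists_need_cons_le hZ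
        (show need δ Z H ≤ (τ - (s + 1)) + 1 by omega)
      have hub : τ - (Multiset.card H + 1) = τ - (s + 1) := by
        rw [hH, card_histUpTo]
      have hval := best_opt τ P μ δ Z hZ (f s) H a ha
      rw [hub] at hval
      have hga : (0 : EReal) ≤ ((μ (f s) a : ℝ) : EReal) +
          MERaux P μ δ Z (τ - (s + 1)) (a ::ₘ H) :=
        add_nonneg (by exact_mod_cast (hμ (f s) a).1)
          (MERaux_nonneg P μ δ Z (fun u => (hP u).le) (fun u b => (hμ u b).1) hZ _ _ hle)
      have hbne : MERaux P μ δ Z (τ - (s + 1)) ((best τ P μ δ Z (f s) H) ::ₘ H) ≠ ⊥ := by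
        intro hbot
        rw [hbot, EReal.add_bot] at hval
        have := le_trans hga hval
        simp at this
      have hneed : need δ Z ((best τ P μ δ Z (f s) H) ::ₘ H) ≤ τ - (s + 1) := by
        by_contra hcon
        push_neg at hcon
        exact hbne (MERaux_bot P μ δ Z hn hP _ _ hcon)
      show need δ Z (best τ P μ δ Z (f s) H ::ₘ H) ≤ τ - (s + 1)
      exact hneed

lemma exposure_histUpTo [NeZero k] (hn : 0 < n) (hP : ∀ u, 0 < P u) (hPsum : ∑ u, P u = 1)
    (hμ : ∀ u a, 0 ≤ μ u a ∧ μ u a ≤ 1) (hZ : Z.Nonempty) (hZfeas : ∑ a ∈ Z, δ a ≤ τ)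
    (f : ℕ → Fin n) : ∀ a ∈ Z, δ a ≤ (histUpTo τ P μ δ Z f τ).count a := by
  have h := need_histUpTo τ P μ δ Z hn hP hPsum hμ hZ hZfeas f τ le_rfl
  rw [Nat.sub_self, Nat.le_zero] at h
  exact need_eq_zero_iff.mp h

lemma count_histUpTo [NeZero k] (f : ℕ → Fin n) (a : Fin k) :
    ∀ s, (histUpTo τ P μ δ Z f s).count a
      = ((Finset.range s).filter (fun l => gstep τ P μ δ Z f l = a)).card := by
  intro s
  induction s with
  | zero => simp [histUpTo]
  | succ s ih =>
      rw [histUpTo_succ, Multiset.count_cons, ih, Finset.range_add_one, Finset.filter_insert]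
      by_cases h : gstep τ P μ δ Z f s = a
      · rw [if_pos h, if_pos h.symm,
          Finset.card_insert_of_notMem (by simp)]
      · rw [if_neg h, if_neg (fun hc => h hc.symm), add_zero]

end DPAlg

section DPAlg2
variable {k n : ℕ} (T τ : ℕ) (P : Fin n → ℝ) (μ : Fin n → Fin k → ℝ) (δ : Fin k → ℕ)
  (Z : Finset (Fin k))

/-- extension of an arrival sequence by a default type -/
def extq [NeZero n] (T : ℕ) (q : Fin T → Fin n) (m : ℕ) : Fin n :=
  if h : m < T then q ⟨m, h⟩ else default

/-- the greedy dynamic-programming algorithm -/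
noncomputable def dpAlgFun [NeZero k] [NeZero n] : (Fin T → Fin n) → Fin T → Fin k :=
  fun q t => gstep τ P μ δ Z (fun l => extq T q ((t : ℕ) / τ * τ + l)) ((t : ℕ) % τ)

lemma dp_pull_eq [NeZero k] [NeZero n] (hτ : 0 < τ) (j s : ℕ) (hs : s < τ)
    (ht : j * τ + s < T) (q : Fin T → Fin n) :
    dpAlgFun T τ P μ δ Z q ⟨j * τ + s, ht⟩
      = gstep τ P μ δ Z (fun l => extq T q (j * τ + l)) s := by
  unfold dpAlgFun
  have hdiv : (j * τ + s) / τ = j := by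
    rw [add_comm, Nat.add_mul_div_right _ _ hτ, Nat.div_eq_of_lt hs, Nat.zero_add]
  have hmod : (j * τ + s) % τ = s := by
    rw [add_comm, Nat.add_mul_mod_self_right, Nat.mod_eq_of_lt hs]
  show gstep τ P μ δ Z (fun l => extq T q ((j * τ + s) / τ * τ + l)) ((j * τ + s) % τ) = _
  rw [hdiv, hmod]

lemma dp_causal [NeZero k] [NeZero n] (hτ : 0 < τ) :
    Causal (dpAlgFun T τ P μ δ Z) := by
  intro q q' t h
  unfold dpAlgFun
  refine gstep_congr τ P μ δ Z _ _ _ fun l hl => ?_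
  have hle : (t : ℕ) / τ * τ + l ≤ (t : ℕ) := by
    have h1 : (t : ℕ) % τ + τ * ((t : ℕ) / τ) = (t : ℕ) := Nat.mod_add_div _ _
    have h2 : l ≤ (t : ℕ) % τ := hl
    have h3 : (t : ℕ) / τ * τ = τ * ((t : ℕ) / τ) := Nat.mul_comm _ _
    omega
  have hlt : (t : ℕ) / τ * τ + l < T := lt_of_le_of_lt hle t.2
  rw [extq, extq, dif_pos hlt, dif_pos hlt]
  exact h ⟨(t : ℕ) / τ * τ + l, hlt⟩ (by exact hle)

end DPAlg2

section DPAlg3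
variable {k n : ℕ} (T τ : ℕ) (P : Fin n → ℝ) (μ : Fin n → Fin k → ℝ) (δ : Fin k → ℕ)
  (Z : Finset (Fin k))

lemma dp_pull_phase0 [NeZero k] [NeZero n] (hτ : 0 < τ) (r : ℕ) (hrτ : r < τ) (hrT : r < T)
    (q : Fin T → Fin n) :
    dpAlgFun T τ P μ δ Z q ⟨r, hrT⟩ = gstep τ P μ δ Z (fun l => extq T q l) r := by
  have h0 : (⟨r, hrT⟩ : Fin T) = ⟨0 * τ + r, by omega⟩ := Fin.ext (by simp)
  rw [h0, dp_pull_eq T τ P μ δ Z hτ 0 r hrτ _ q]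
  refine gstep_congr τ P μ δ Z _ _ r fun l _ => ?_
  rw [Nat.zero_mul, Nat.zero_add]

lemma dp_phaseInd [NeZero k] [NeZero n] (hτ : 0 < τ)
    (hC : Causal (dpAlgFun T τ P μ δ Z)) :
    PhaseInd τ (⟨dpAlgFun T τ P μ δ Z, hC⟩ : Alg k n T) := by
  intro q i j s hs hi hj hag
  show dpAlgFun T τ P μ δ Z q ⟨i * τ + s, hi⟩ = dpAlgFun T τ P μ δ Z q ⟨j * τ + s, hj⟩
  rw [dp_pull_eq T τ P μ δ Z hτ i s hs hi q, dp_pull_eq T τ P μ δ Z hτ j s hs hj q]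
  refine gstep_congr τ P μ δ Z _ _ s fun l hl => ?_
  have hil : i * τ + l < T := by omega
  have hjl : j * τ + l < T := by omega
  rw [extq, extq, dif_pos hil, dif_pos hjl]
  exact hag l hl hil hjl

lemma dp_committed [NeZero k] [NeZero n] (hτ : 0 < τ) (hn : 0 < n) (hP : ∀ u, 0 < P u)
    (hPsum : ∑ u, P u = 1) (hμ : ∀ u a, 0 ≤ μ u a ∧ μ u a ≤ 1) (hZ : Z.Nonempty)
    (hZfeas : ∑ a ∈ Z, δ a ≤ τ) (hC : Causal (dpAlgFun T τ P μ δ Z)) :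
    Committed τ δ Z (⟨dpAlgFun T τ P μ δ Z, hC⟩ : Alg k n T) := by
  intro q
  constructor
  · intro t
    exact gstep_mem τ P μ δ Z hZ _ _
  · intro j hj a ha
    set f : ℕ → Fin n := fun l => extq T q (j * τ + l) with hf
    have hcnt := exposure_histUpTo τ P μ δ Z hn hP hPsum hμ hZ hZfeas f a ha
    rw [count_histUpTo] at hcnt
    refine le_trans hcnt (le_of_eq ?_)
    rw [pullsInPhase]
    refine Finset.card_bij'
      (i := fun s hs => (⟨j * τ + s, ?_⟩ : Fin T))
      (j := fun t ht => (t : ℕ) - j * τ) ?_ ?_ ?_ ?_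
    · have hs' : s < τ := Finset.mem_range.mp (Finset.mem_filter.mp hs).1
      calc j * τ + s < j * τ + τ := by omega
        _ = (j + 1) * τ := by ring
        _ ≤ T := hj
    · intro s hs
      obtain ⟨hsr, hgs⟩ := Finset.mem_filter.mp hs
      have hs' : s < τ := Finset.mem_range.mp hsr
      refine Finset.mem_filter.mpr ⟨Finset.mem_univ _, ?_, ?_, ?_⟩
      · simp
      · show (j * τ + s : ℕ) < (j + 1) * τ
        have : (j + 1) * τ = j * τ + τ := by ring
        omega
      · show dpAlgFun T τ P μ δ Z q ⟨j * τ + s, _⟩ = a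
        rw [dp_pull_eq T τ P μ δ Z hτ j s hs' _ q]
        exact hgs
    · intro t ht
      obtain ⟨-, h1, h2, h3⟩ := Finset.mem_filter.mp ht
      have hjj : (j + 1) * τ = j * τ + τ := by ring
      set s0 := (t : ℕ) - j * τ with hs0
      have hs0τ : s0 < τ := by omega
      have hs0T : j * τ + s0 < T := by omega
      have hteq : (⟨j * τ + s0, hs0T⟩ : Fin T) = t := Fin.ext (by simp [hs0]; omega)
      rw [← hteq] at h3
      have h3' : dpAlgFun T τ P μ δ Z q ⟨j * τ + s0, hs0T⟩ = a := h3
      rw [dp_pull_eq T τ P μ δ Z hτ j s0 hs0τ hs0T q] at h3'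
      show s0 ∈ Finset.filter _ (Finset.range τ)
      exact Finset.mem_filter.mpr ⟨Finset.mem_range.mpr hs0τ, h3'⟩
    · intro s hs
      simp
    · intro t ht
      obtain ⟨-, h1, h2, h3⟩ := Finset.mem_filter.mp ht
      have hjj : (j + 1) * τ = j * τ + τ := by ring
      exact Fin.ext (by simp; omega)

lemma histr_dp [NeZero k] [NeZero n] (hτ : 0 < τ) (hτT : τ ≤ T) (q : Fin T → Fin n) :
    ∀ r, r ≤ τ → histr T r (dpAlgFun T τ P μ δ Z q)
      = histUpTo τ P μ δ Z (fun l => extq T q l) r := by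
  intro r
  induction r with
  | zero => intro _; rw [histr_zero]; rfl
  | succ r ih =>
      intro hr
      have hrτ : r < τ := hr
      have hrT : r < T := lt_of_lt_of_le hrτ hτT
      rw [histr_succ T r hrT, ih (le_of_lt hrτ), histUpTo_succ,
        dp_pull_phase0 T τ P μ δ Z hτ r hrτ hrT q]

lemma dp_greedy [NeZero k] [NeZero n] (hτ : 0 < τ) (hτT : τ ≤ T) (hZ : Z.Nonempty)
    (q : Fin T → Fin n) (r : ℕ) (hrτ : r < τ) (hrT : r < T) :
    ∀ b ∈ Z,
      ((μ (q ⟨r, hrT⟩) b : ℝ) : EReal) +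
          MERaux P μ δ Z (τ - (r + 1)) (b ::ₘ histr T r (dpAlgFun T τ P μ δ Z q))
        ≤ ((μ (q ⟨r, hrT⟩) (dpAlgFun T τ P μ δ Z q ⟨r, hrT⟩) : ℝ) : EReal) +
            MERaux P μ δ Z (τ - (r + 1))
              (dpAlgFun T τ P μ δ Z q ⟨r, hrT⟩ ::ₘ histr T r (dpAlgFun T τ P μ δ Z q)) := by
  intro b hb
  rw [histr_dp T τ P μ δ Z hτ hτT q r (le_of_lt hrτ),
    dp_pull_phase0 T τ P μ δ Z hτ r hrτ hrT q]
  have hfr : (fun l => extq T q l) r = q ⟨r, hrT⟩ := by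
    show extq T q r = q ⟨r, hrT⟩
    rw [extq, dif_pos hrT]
  have hcard : τ - (Multiset.card (histUpTo τ P μ δ Z (fun l => extq T q l) r) + 1)
      = τ - (r + 1) := by rw [card_histUpTo]
  have h := best_opt τ P μ δ Z hZ ((fun l => extq T q l) r)
    (histUpTo τ P μ δ Z (fun l => extq T q l) r) b hb
  rw [hcard, hfr] at h
  have hg : gstep τ P μ δ Z (fun l => extq T q l) r
      = best τ P μ δ Z (q ⟨r, hrT⟩) (histUpTo τ P μ δ Z (fun l => extq T q l) r) := by
    simp only [gstep]
    rw [show extq T q r = q ⟨r, hrT⟩ from by rw [extq, dif_pos hrT]]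
  rw [hg]
  exact h

end DPAlg3

section Bridge
variable {k n : ℕ}

lemma phaseHist_eq_histr {T : ℕ} (τ : ℕ) (pull : Fin T → Fin k) (t : Fin T)
    (ht : (t : ℕ) < τ) : phaseHist τ pull t = histr T (t : ℕ) pull := by
  unfold phaseHist histr
  congr 2
  ext s
  simp [Nat.div_eq_of_lt ht]

lemma histr_count_pulls0 (τ T : ℕ) (pull : Fin T → Fin k) (a : Fin k) :
    (histr T τ pull).count a = pullsInPhase T τ pull 0 a := by
  rw [count_histr, pullsInPhase]
  congr 1
  ext t
  simp only [Finset.mem_filter, Finset.mem_univ, true_and, Nat.zero_mul, Nat.zero_add,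
    Nat.one_mul, Nat.zero_le]

end Bridge

/-- Theorem 3 of the paper: `MER(∅, Z)` equals the expected first-phase reward of `PICO(Z)`,
and any greedy policy `DP(Z)` that pulls an arm maximizing `μ_{u_t,a} + MER(H^{t-1} ∪ {a}, Z)`
attains this value. -/
theorem dp_attains_pico
    (k n τ N : ℕ) (hk : 1 ≤ k) (hn : 1 ≤ n) (hτ : 1 ≤ τ) (hN : 1 ≤ N)
    (P : Fin n → ℝ) (hP : ∀ u, 0 < P u) (hPsum : ∑ u, P u = 1)
    (μ : Fin n → Fin k → ℝ) (hμ : ∀ u a, 0 ≤ μ u a ∧ μ u a ≤ 1)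
    (δ : Fin k → ℕ) (hδ : ∀ a, δ a ≤ τ)
    (Z : Finset (Fin k)) (hZne : Z.Nonempty) (hZfeas : ∑ a ∈ Z, δ a ≤ τ) :
    MER τ P μ δ Z 0 = ((picoZReward k n (N * τ) τ P μ δ Z : ℝ) : EReal) ∧
    ∀ A : Alg k n (N * τ),
      (∀ (q : Fin (N * τ) → Fin n) (t : Fin (N * τ)),
        A.1 q t ∈ Z ∧
        ∀ b ∈ Z,
          ((μ (q t) b : ℝ) : EReal) + MER τ P μ δ Z (b ::ₘ phaseHist τ (A.1 q) t)
            ≤ ((μ (q t) (A.1 q t) : ℝ) : EReal) +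
                MER τ P μ δ Z ((A.1 q t) ::ₘ phaseHist τ (A.1 q) t)) →
      ((expFirstPhase k n (N * τ) τ P μ A : ℝ) : EReal) = MER τ P μ δ Z 0 := by
  classical
  haveI : NeZero k := ⟨by omega⟩
  haveI : NeZero n := ⟨by omega⟩
  have hτpos : 0 < τ := hτ
  have hnpos : 0 < n := hn
  have hτT : τ ≤ N * τ := by
    calc τ = 1 * τ := (Nat.one_mul τ).symm
      _ ≤ N * τ := Nat.mul_le_mul_right τ hN
  have hMER0 : MER τ P μ δ Z 0 = MERaux P μ δ Z τ 0 := by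
    rw [MER]; simp
  have hneed0 : need δ Z (0 : Multiset (Fin k)) ≤ τ := by
    rw [need_zero]; exact hZfeas
  obtain ⟨V, hV⟩ := MERaux_fin P μ δ Z hP hPsum hμ hZne hneed0
  have hupper : ∀ B : {A : Alg k n (N * τ) // PhaseInd τ A ∧ Committed τ δ Z A},
      expFirstPhase k n (N * τ) τ P μ B.1 ≤ V := by
    intro B
    have hmem : ∀ (q : Fin (N * τ) → Fin n) (t : Fin (N * τ)), (t : ℕ) < τ → B.1.1 q t ∈ Z :=
      fun q t _ => (B.2.2 q).1 t
    have hexp : ∀ q : Fin (N * τ) → Fin n, ∀ a ∈ Z,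
        δ a ≤ (histr (N * τ) τ (B.1.1 q)).count a := by
      intro q a ha
      rw [histr_count_pulls0 τ (N * τ) _ a]
      exact (B.2.2 q).2 0 (by simpa using hτT) a ha
    have h := upper_main (N * τ) τ P μ δ Z hnpos (fun u => (hP u).le) hPsum hτT B.1 hmem hexp
    rw [hV] at h
    exact_mod_cast h
  have hC : Causal (dpAlgFun (N * τ) τ P μ δ Z) := dp_causal (N * τ) τ P μ δ Z hτpos
  set A0 : Alg k n (N * τ) := ⟨dpAlgFun (N * τ) τ P μ δ Z, hC⟩ with hA0def
  have hA0mem : ∀ (q : Fin (N * τ) → Fin n) (t : Fin (N * τ)), (t : ℕ) < τ → A0.1 q t ∈ Z :=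
    fun q t _ => gstep_mem τ P μ δ Z hZne _ _
  have hA0g : ∀ (q : Fin (N * τ) → Fin n) (r : ℕ) (hrτ : r < τ) (hrT : r < N * τ), ∀ b ∈ Z,
      ((μ (q ⟨r, hrT⟩) b : ℝ) : EReal) +
          MERaux P μ δ Z (τ - (r + 1)) (b ::ₘ histr (N * τ) r (A0.1 q))
        ≤ ((μ (q ⟨r, hrT⟩) (A0.1 q ⟨r, hrT⟩) : ℝ) : EReal) +
            MERaux P μ δ Z (τ - (r + 1)) (A0.1 q ⟨r, hrT⟩ ::ₘ histr (N * τ) r (A0.1 q)) :=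
    fun q r hrτ hrT => dp_greedy (N * τ) τ P μ δ Z hτpos hτT hZne q r hrτ hrT
  have hA0val : ((expFirstPhase k n (N * τ) τ P μ A0 : ℝ) : EReal) = MERaux P μ δ Z τ 0 :=
    greedy_main (N * τ) τ P μ δ Z hnpos hP hPsum hμ hZne hZfeas hτT A0 hA0mem hA0g
  have hA0V : expFirstPhase k n (N * τ) τ P μ A0 = V := by
    rw [hV] at hA0val
    exact_mod_cast hA0val
  have hsub : PhaseInd τ A0 ∧ Committed τ δ Z A0 :=
    ⟨dp_phaseInd (N * τ) τ P μ δ Z hτpos hC,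
      dp_committed (N * τ) τ P μ δ Z hτpos hnpos hP hPsum hμ hZne hZfeas hC⟩
  constructor
  · have hpz : picoZReward k n (N * τ) τ P μ δ Z = V := by
      rw [picoZReward]
      haveI : Nonempty {A : Alg k n (N * τ) // PhaseInd τ A ∧ Committed τ δ Z A} :=
        ⟨⟨A0, hsub⟩⟩
      refine le_antisymm (ciSup_le fun B => hupper B) ?_
      refine le_ciSup_of_le ⟨V, ?_⟩ ⟨A0, hsub⟩ (le_of_eq hA0V.symm)
      rintro x ⟨B, rfl⟩
      exact hupper B
    rw [hMER0, hV, hpz]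
  · intro A hA
    rw [hMER0]
    refine greedy_main (N * τ) τ P μ δ Z hnpos hP hPsum hμ hZne hZfeas hτT A
      (fun q t _ => (hA q t).1) ?_
    intro q r hrτ hrT b hb
    have h := (hA q ⟨r, hrT⟩).2 b hb
    have hh : phaseHist τ (A.1 q) ⟨r, hrT⟩ = histr (N * τ) r (A.1 q) :=
      phaseHist_eq_histr τ (A.1 q) ⟨r, hrT⟩ hrτ
    rw [hh] at h
    have hcard : ∀ c : Fin k, MER τ P μ δ Z (c ::ₘ histr (N * τ) r (A.1 q))
        = MERaux P μ δ Z (τ - (r + 1)) (c ::ₘ histr (N * τ) r (A.1 q)) := by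
      intro c
      rw [MER, Multiset.card_cons, card_histr (N * τ) r (le_trans (le_of_lt hrτ) hτT)]
    rw [hcard b, hcard (A.1 q ⟨r, hrT⟩)] at h
    exact h

end ExposureBandits
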